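/- Let p be a probability mass function sorted nonincreasingly with p 1 > 0. For every K with p K > 0, the PRO score satisfies -log (p 1) ≤ PRO_K ≤ H(p): the PRO score interpolates between the NLL of the top generation and the full predictive entropy. -/
import Mathlib


/-- The PRO score interpolates between the NLL of the top generation and the
full predictive entropy: -log (p 1) ≤ PRO_K ≤ H(p). -/
theorem PRO_between_NLL_and_entropy (p : ℕ → ℝ) (K : ℕ)
    (hnn : ∀ i, 0 ≤ p i)
    (hs : Summable (fun i => p (i + 1)))
    (hsum : ∑' i, p (i + 1) = 1)
    (hsort : ∀ i j, 1 ≤ i → i ≤ j → p j ≤ p i)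
    (hK : 1 ≤ K) (hp1 : 0 < p 1) (hpK : 0 < p K)
    (hHs : Summable (fun i => p (i + 1) * Real.log (p (i + 1)))) :
    -Real.log (p 1) ≤
        -Real.log (p K) - ∑ i ∈ Finset.Icc 1 K, p i * Real.log (p i / p K) ∧
      -Real.log (p K) - ∑ i ∈ Finset.Icc 1 K, p i * Real.log (p i / p K) ≤
        -∑' i, p (i + 1) * Real.log (p (i + 1)) := by
  have hpos : ∀ i ∈ Finset.Icc 1 K, 0 < p i := by
    intro i hi
    rw [Finset.mem_Icc] at hi
    exact lt_of_lt_of_le hpK (hsort i K hi.1 hi.2)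
  set S := ∑ i ∈ Finset.Icc 1 K, p i with hS
  set E := ∑ i ∈ Finset.Icc 1 K, p i * Real.log (p i) with hE
  have hrw : ∑ i ∈ Finset.Icc 1 K, p i * Real.log (p i / p K)
      = E - S * Real.log (p K) := by
    rw [hE, hS, Finset.sum_mul, ← Finset.sum_sub_distrib]
    apply Finset.sum_congr rfl
    intro i hi
    rw [Real.log_div (ne_of_gt (hpos i hi)) (ne_of_gt hpK)]
    ring
  have hSrange : S = ∑ i ∈ Finset.range K, p (i + 1) := by
    rw [hS, ← Finset.Ico_add_one_right_eq_Icc, Finset.sum_Ico_eq_sum_range]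
    simp [add_comm]
  have hS1 : S ≤ 1 := by
    rw [hSrange, ← hsum]
    exact Summable.sum_le_tsum _ (fun i _ => hnn _) hs
  have hlogpK1 : Real.log (p K) ≤ Real.log (p 1) :=
    Real.log_le_log hpK (hsort 1 K le_rfl hK)
  constructor
  · -- lower bound
    rw [hrw]
    have hElep : E ≤ S * Real.log (p 1) := by
      rw [hE, hS, Finset.sum_mul]
      apply Finset.sum_le_sum
      intro i hi
      have hi1 : 1 ≤ i := (Finset.mem_Icc.mp hi).1
      exact mul_le_mul_of_nonneg_left
        (Real.log_le_log (hpos i hi) (hsort 1 i le_rfl hi1)) (hnn i)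
    have h1 : (1 - S) * Real.log (p K) ≤ (1 - S) * Real.log (p 1) :=
      mul_le_mul_of_nonneg_left hlogpK1 (by linarith)
    have h1' : Real.log (p K) - S * Real.log (p K)
        ≤ Real.log (p 1) - S * Real.log (p 1) := by linear_combination h1
    linarith
  · -- upper bound
    rw [hrw]
    have hsplit := Summable.sum_add_tsum_nat_add (f := fun i => p (i + 1) * Real.log (p (i + 1))) K hHs
    have hsplit2 := Summable.sum_add_tsum_nat_add (f := fun i => p (i + 1)) K hs
    have hEr : E = ∑ i ∈ Finset.range K, p (i + 1) * Real.log (p (i + 1)) := by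
      rw [hE, ← Finset.Ico_add_one_right_eq_Icc, Finset.sum_Ico_eq_sum_range]
      simp [add_comm]
    have hTs : Summable (fun i => p (i + K + 1) * Real.log (p (i + K + 1))) := by
      have := (summable_nat_add_iff (f := fun i => p (i + 1) * Real.log (p (i + 1))) K).mpr hHs
      simpa using this
    have hTps : Summable (fun i => p (i + K + 1)) := by
      have := (summable_nat_add_iff (f := fun i => p (i + 1)) K).mpr hs
      simpa using this
    have htail_sum : ∑' i, p (i + K + 1) = 1 - S := by
      rw [hSrange]
      have := hsplit2
      rw [hsum] at this
      linarith
    have hTle : (∑' i, p (i + K + 1) * Real.log (p (i + K + 1)))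
        ≤ (1 - S) * Real.log (p K) := by
      have hterm : ∀ i, p (i + K + 1) * Real.log (p (i + K + 1))
          ≤ p (i + K + 1) * Real.log (p K) := by
        intro i
        rcases eq_or_lt_of_le (hnn (i + K + 1)) with h | h
        · rw [← h]; simp
        · exact mul_le_mul_of_nonneg_left
            (Real.log_le_log h (hsort K (i + K + 1) hK (by omega))) (hnn _)
      have h2 : (∑' i, p (i + K + 1) * Real.log (p (i + K + 1)))
          ≤ ∑' i, p (i + K + 1) * Real.log (p K) :=
        Summable.tsum_le_tsum hterm hTs (hTps.mul_right _)
      rwa [tsum_mul_right, htail_sum] at h2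
    rw [← hsplit, ← hEr]
    have hx : (1 - S) * Real.log (p K)
        = Real.log (p K) - S * Real.log (p K) := by ring
    linarith
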